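/- The function h_H^{(3)}(p) = (1/6)·(h_B^{(3)}(p) + (p₀ + 2(p₀+2p₁+p₂)³)·ln 2), over the simplex {p_i > 0, p₀+3p₁+3p₂+p₃=1}, attains a value strictly greater than 0.4303 at p = (0.504, 0.110, 0.048, 0.021) normalized appropriately; in particular sup h_H^{(3)} > max_p (1/2)(h_B(p)+(1−p)³ln 2) − 0.003. -/

import Mathlib

/-- The binary entropy function. -/
noncomputable def hB (p : ℝ) : ℝ := -p * Real.log p - (1 - p) * Real.log (1 - p)

/-- Entropy of the Bernoulli distribution on three-hexes. -/
noncomputable def h3 (p₀ p₁ p₂ p₃ : ℝ) : ℝ :=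
  -p₀ * Real.log p₀ - 3 * p₁ * Real.log p₁ - 3 * p₂ * Real.log p₂ -
    p₃ * Real.log p₃

/-- The honeycomb three-hex lower bound (3.1). -/
noncomputable def hH3 (p₀ p₁ p₂ p₃ : ℝ) : ℝ :=
  (1 / 6) * (h3 p₀ p₁ p₂ p₃ +
    (p₀ + 2 * (p₀ + 2 * p₁ + p₂) ^ 3) * Real.log 2)

lemma series_log_bounds (x : ℝ) (n : ℕ) (S T : ℝ) (hx : |x| < 1)
    (hS : (∑ i ∈ Finset.range n, x ^ (i + 1) / (i + 1)) = S)
    (hT : |x| ^ (n + 1) / (1 - |x|) ≤ T) :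
    -S - T ≤ Real.log (1 - x) ∧ Real.log (1 - x) ≤ -S + T := by
  have h := Real.abs_log_sub_add_sum_range_le hx n
  rw [hS, abs_le] at h
  constructor <;> linarith [h.1, h.2]

lemma logp0_ub : Real.log (63/125 : ℝ) ≤ (-685179010623/1000000000000 : ℝ) := by
  have h := series_log_bounds (-1/125 : ℝ) 4 (-23344247/2929687500 : ℝ) (33033/1000000000000000 : ℝ) (by rw [abs_of_nonpos (by norm_num : (-1/125 : ℝ) ≤ 0)]; norm_num)
    (by norm_num [Finset.sum_range_succ]) (by rw [abs_of_nonpos (by norm_num : (-1/125 : ℝ) ≤ 0)]; norm_num)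
  have h2 : Real.log (63/125 : ℝ) = Real.log (1 - (-1/125 : ℝ)) - 1 * Real.log 2 := by
    rw [show (63/125 : ℝ) = (1 - (-1/125 : ℝ))/2^1 by norm_num,
      Real.log_div (by norm_num) (by positivity), Real.log_pow]
    push_cast; ring
  have l2a := Real.log_two_gt_d9
  have l2b := Real.log_two_lt_d9
  rw [h2]
  linarith [h.1, h.2]

lemma logp1_ub : Real.log (11/100 : ℝ) ≤ (-2207274857529/1000000000000 : ℝ) := by
  have h := series_log_bounds (3/25 : ℝ) 7 (21846522423/170898437500 : ℝ) (48861557/1000000000000000 : ℝ) (by rw [abs_of_nonneg (by norm_num : (0:ℝ) ≤ (3/25 : ℝ))]; norm_num)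
    (by norm_num [Finset.sum_range_succ]) (by rw [abs_of_nonneg (by norm_num : (0:ℝ) ≤ (3/25 : ℝ))]; norm_num)
  have h2 : Real.log (11/100 : ℝ) = Real.log (1 - (3/25 : ℝ)) - 3 * Real.log 2 := by
    rw [show (11/100 : ℝ) = (1 - (3/25 : ℝ))/2^3 by norm_num,
      Real.log_div (by norm_num) (by positivity), Real.log_pow]
    push_cast; ring
  have l2a := Real.log_two_gt_d9
  have l2b := Real.log_two_lt_d9
  rw [h2]
  linarith [h.1, h.2]

lemma logp2_ub : Real.log (6/125 : ℝ) ≤ (-1518276810781/500000000000 : ℝ) := by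
  have h := series_log_bounds (29/125 : ℝ) 9 (991214858230067310289/3755092620849609375000 : ℝ) (36761959/62500000000000 : ℝ) (by rw [abs_of_nonneg (by norm_num : (0:ℝ) ≤ (29/125 : ℝ))]; norm_num)
    (by norm_num [Finset.sum_range_succ]) (by rw [abs_of_nonneg (by norm_num : (0:ℝ) ≤ (29/125 : ℝ))]; norm_num)
  have h2 : Real.log (6/125 : ℝ) = Real.log (1 - (29/125 : ℝ)) - 4 * Real.log 2 := by
    rw [show (6/125 : ℝ) = (1 - (29/125 : ℝ))/2^4 by norm_num,
      Real.log_div (by norm_num) (by positivity), Real.log_pow]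
    push_cast; ring
  have l2a := Real.log_two_gt_d9
  have l2b := Real.log_two_lt_d9
  rw [h2]
  linarith [h.1, h.2]

lemma logp3_ub : Real.log (11/500 : ℝ) ≤ (-29818050489/7812500000 : ℝ) := by
  have h := series_log_bounds (37/125 : ℝ) 10 (823718835205884190508573/2346932888031005859375000 : ℝ) (86835269/40000000000000 : ℝ) (by rw [abs_of_nonneg (by norm_num : (0:ℝ) ≤ (37/125 : ℝ))]; norm_num)
    (by norm_num [Finset.sum_range_succ]) (by rw [abs_of_nonneg (by norm_num : (0:ℝ) ≤ (37/125 : ℝ))]; norm_num)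
  have h2 : Real.log (11/500 : ℝ) = Real.log (1 - (37/125 : ℝ)) - 5 * Real.log 2 := by
    rw [show (11/500 : ℝ) = (1 - (37/125 : ℝ))/2^5 by norm_num,
      Real.log_div (by norm_num) (by positivity), Real.log_pow]
    push_cast; ring
  have l2a := Real.log_two_gt_d9
  have l2b := Real.log_two_lt_d9
  rw [h2]
  linarith [h.1, h.2]

lemma logc0_lb : (-3912026884531/1000000000000 : ℝ) ≤ Real.log (1/50 : ℝ) := by
  have h := series_log_bounds (-7/25 : ℝ) 9 (-67802210297381/274658203125000 : ℝ) (2056921991/500000000000000 : ℝ) (by rw [abs_of_nonpos (by norm_num : (-7/25 : ℝ) ≤ 0)]; norm_num)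
    (by norm_num [Finset.sum_range_succ]) (by rw [abs_of_nonpos (by norm_num : (-7/25 : ℝ) ≤ 0)]; norm_num)
  have h2 : Real.log (1/50 : ℝ) = Real.log (1 - (-7/25 : ℝ)) - 6 * Real.log 2 := by
    rw [show (1/50 : ℝ) = (1 - (-7/25 : ℝ))/2^6 by norm_num,
      Real.log_div (by norm_num) (by positivity), Real.log_pow]
    push_cast; ring
  have l2a := Real.log_two_gt_d9
  have l2b := Real.log_two_lt_d9
  rw [h2]
  linarith [h.1, h.2]

lemma logd0_lb : (-10101353659/500000000000 : ℝ) ≤ Real.log (49/50 : ℝ) := by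
  have h := series_log_bounds (1/50 : ℝ) 9 (9943520007841603/492187500000000000 : ℝ) (1/1000000000000000 : ℝ) (by rw [abs_of_nonneg (by norm_num : (0:ℝ) ≤ (1/50 : ℝ))]; norm_num)
    (by norm_num [Finset.sum_range_succ]) (by rw [abs_of_nonneg (by norm_num : (0:ℝ) ≤ (1/50 : ℝ))]; norm_num)
  have h2 : Real.log (49/50 : ℝ) = Real.log (1 - (1/50 : ℝ)) - 0 * Real.log 2 := by
    rw [show (49/50 : ℝ) = (1 - (1/50 : ℝ))/2^0 by norm_num,
      Real.log_div (by norm_num) (by positivity), Real.log_pow]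
    push_cast; ring
  have l2a := Real.log_two_gt_d9
  have l2b := Real.log_two_lt_d9
  rw [h2]
  linarith [h.1, h.2]

lemma logc1_lb : (-3218879703731/1000000000000 : ℝ) ≤ Real.log (1/25 : ℝ) := by
  have h := series_log_bounds (-7/25 : ℝ) 9 (-67802210297381/274658203125000 : ℝ) (2056921991/500000000000000 : ℝ) (by rw [abs_of_nonpos (by norm_num : (-7/25 : ℝ) ≤ 0)]; norm_num)
    (by norm_num [Finset.sum_range_succ]) (by rw [abs_of_nonpos (by norm_num : (-7/25 : ℝ) ≤ 0)]; norm_num)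
  have h2 : Real.log (1/25 : ℝ) = Real.log (1 - (-7/25 : ℝ)) - 5 * Real.log 2 := by
    rw [show (1/25 : ℝ) = (1 - (-7/25 : ℝ))/2^5 by norm_num,
      Real.log_div (by norm_num) (by positivity), Real.log_pow]
    push_cast; ring
  have l2a := Real.log_two_gt_d9
  have l2b := Real.log_two_lt_d9
  rw [h2]
  linarith [h.1, h.2]

lemma logd1_lb : (-40821994521/1000000000000 : ℝ) ≤ Real.log (24/25 : ℝ) := by
  have h := series_log_bounds (1/25 : ℝ) 9 (78484669640381/1922607421875000 : ℝ) (11/1000000000000000 : ℝ) (by rw [abs_of_nonneg (by norm_num : (0:ℝ) ≤ (1/25 : ℝ))]; norm_num)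
    (by norm_num [Finset.sum_range_succ]) (by rw [abs_of_nonneg (by norm_num : (0:ℝ) ≤ (1/25 : ℝ))]; norm_num)
  have h2 : Real.log (24/25 : ℝ) = Real.log (1 - (1/25 : ℝ)) - 0 * Real.log 2 := by
    rw [show (24/25 : ℝ) = (1 - (1/25 : ℝ))/2^0 by norm_num,
      Real.log_div (by norm_num) (by positivity), Real.log_pow]
    push_cast; ring
  have l2a := Real.log_two_gt_d9
  have l2b := Real.log_two_lt_d9
  rw [h2]
  linarith [h.1, h.2]

lemma logc2_lb : (-43256463027/20000000000 : ℝ) ≤ Real.log (23/200 : ℝ) := by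
  have h := series_log_bounds (2/25 : ℝ) 9 (20038762523984/240325927734375 : ℝ) (1459/125000000000000 : ℝ) (by rw [abs_of_nonneg (by norm_num : (0:ℝ) ≤ (2/25 : ℝ))]; norm_num)
    (by norm_num [Finset.sum_range_succ]) (by rw [abs_of_nonneg (by norm_num : (0:ℝ) ≤ (2/25 : ℝ))]; norm_num)
  have h2 : Real.log (23/200 : ℝ) = Real.log (1 - (2/25 : ℝ)) - 3 * Real.log 2 := by
    rw [show (23/200 : ℝ) = (1 - (2/25 : ℝ))/2^3 by norm_num,
      Real.log_div (by norm_num) (by positivity), Real.log_pow]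
    push_cast; ring
  have l2a := Real.log_two_gt_d9
  have l2b := Real.log_two_lt_d9
  rw [h2]
  linarith [h.1, h.2]

lemma logd2_lb : (-122167634387/1000000000000 : ℝ) ≤ Real.log (177/200 : ℝ) := by
  have h := series_log_bounds (23/200 : ℝ) 9 (492579900001823420977/4032000000000000000000 : ℝ) (228563/500000000000000 : ℝ) (by rw [abs_of_nonneg (by norm_num : (0:ℝ) ≤ (23/200 : ℝ))]; norm_num)
    (by norm_num [Finset.sum_range_succ]) (by rw [abs_of_nonneg (by norm_num : (0:ℝ) ≤ (23/200 : ℝ))]; norm_num)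
  have h2 : Real.log (177/200 : ℝ) = Real.log (1 - (23/200 : ℝ)) - 0 * Real.log 2 := by
    rw [show (177/200 : ℝ) = (1 - (23/200 : ℝ))/2^0 by norm_num,
      Real.log_div (by norm_num) (by positivity), Real.log_pow]
    push_cast; ring
  have l2a := Real.log_two_gt_d9
  have l2b := Real.log_two_lt_d9
  rw [h2]
  linarith [h.1, h.2]

lemma logc3_lb : (-94632983359/62500000000 : ℝ) ≤ Real.log (11/50 : ℝ) := by
  have h := series_log_bounds (3/25 : ℝ) 9 (27308154299397/213623046875000 : ℝ) (703607/1000000000000000 : ℝ) (by rw [abs_of_nonneg (by norm_num : (0:ℝ) ≤ (3/25 : ℝ))]; norm_num)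
    (by norm_num [Finset.sum_range_succ]) (by rw [abs_of_nonneg (by norm_num : (0:ℝ) ≤ (3/25 : ℝ))]; norm_num)
  have h2 : Real.log (11/50 : ℝ) = Real.log (1 - (3/25 : ℝ)) - 2 * Real.log 2 := by
    rw [show (11/50 : ℝ) = (1 - (3/25 : ℝ))/2^2 by norm_num,
      Real.log_div (by norm_num) (by positivity), Real.log_pow]
    push_cast; ring
  have l2a := Real.log_two_gt_d9
  have l2b := Real.log_two_lt_d9
  rw [h2]
  linarith [h.1, h.2]

lemma logd3_lb : (-124230833297/500000000000 : ℝ) ≤ Real.log (39/50 : ℝ) := by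
  have h := series_log_bounds (11/50 : ℝ) 9 (122289558930912923/492187500000000000 : ℝ) (340511831/1000000000000000 : ℝ) (by rw [abs_of_nonneg (by norm_num : (0:ℝ) ≤ (11/50 : ℝ))]; norm_num)
    (by norm_num [Finset.sum_range_succ]) (by rw [abs_of_nonneg (by norm_num : (0:ℝ) ≤ (11/50 : ℝ))]; norm_num)
  have h2 : Real.log (39/50 : ℝ) = Real.log (1 - (11/50 : ℝ)) - 0 * Real.log 2 := by
    rw [show (39/50 : ℝ) = (1 - (11/50 : ℝ))/2^0 by norm_num,
      Real.log_div (by norm_num) (by positivity), Real.log_pow]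
    push_cast; ring
  have l2a := Real.log_two_gt_d9
  have l2b := Real.log_two_lt_d9
  rw [h2]
  linarith [h.1, h.2]

lemma logc4_lb : (-1139438161331/1000000000000 : ℝ) ≤ Real.log (8/25 : ℝ) := by
  have h := series_log_bounds (-7/25 : ℝ) 9 (-67802210297381/274658203125000 : ℝ) (2056921991/500000000000000 : ℝ) (by rw [abs_of_nonpos (by norm_num : (-7/25 : ℝ) ≤ 0)]; norm_num)
    (by norm_num [Finset.sum_range_succ]) (by rw [abs_of_nonpos (by norm_num : (-7/25 : ℝ) ≤ 0)]; norm_num)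
  have h2 : Real.log (8/25 : ℝ) = Real.log (1 - (-7/25 : ℝ)) - 2 * Real.log 2 := by
    rw [show (8/25 : ℝ) = (1 - (-7/25 : ℝ))/2^2 by norm_num,
      Real.log_div (by norm_num) (by positivity), Real.log_pow]
    push_cast; ring
  have l2a := Real.log_two_gt_d9
  have l2b := Real.log_two_lt_d9
  rw [h2]
  linarith [h.1, h.2]

lemma logd4_lb : (-4820968103/12500000000 : ℝ) ≤ Real.log (17/25 : ℝ) := by
  have h := series_log_bounds (8/25 : ℝ) 9 (92684311393496/240325927734375 : ℝ) (4139337893/250000000000000 : ℝ) (by rw [abs_of_nonneg (by norm_num : (0:ℝ) ≤ (8/25 : ℝ))]; norm_num)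
    (by norm_num [Finset.sum_range_succ]) (by rw [abs_of_nonneg (by norm_num : (0:ℝ) ≤ (8/25 : ℝ))]; norm_num)
  have h2 : Real.log (17/25 : ℝ) = Real.log (1 - (8/25 : ℝ)) - 0 * Real.log 2 := by
    rw [show (17/25 : ℝ) = (1 - (8/25 : ℝ))/2^0 by norm_num,
      Real.log_div (by norm_num) (by positivity), Real.log_pow]
    push_cast; ring
  have l2a := Real.log_two_gt_d9
  have l2b := Real.log_two_lt_d9
  rw [h2]
  linarith [h.1, h.2]

lemma hB_le_cross {q c : ℝ} (hq0 : 0 < q) (hq1 : q < 1) (hc0 : 0 < c) (hc1 : c < 1) :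
    hB q ≤ -(q * Real.log c) - (1 - q) * Real.log (1 - c) := by
  have hq1' : 0 < 1 - q := by linarith
  have hc1' : 0 < 1 - c := by linarith
  have h1 := Real.log_le_sub_one_of_pos (show 0 < c / q by positivity)
  have h2 := Real.log_le_sub_one_of_pos (show 0 < (1 - c) / (1 - q) by positivity)
  rw [Real.log_div (ne_of_gt hc0) (ne_of_gt hq0)] at h1
  rw [Real.log_div (ne_of_gt hc1') (ne_of_gt hq1')] at h2
  have e1 : q * (Real.log c - Real.log q) ≤ c - q := by
    have h3 := mul_le_mul_of_nonneg_left h1 hq0.le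
    have h4 : q * (c / q - 1) = c - q := by field_simp
    linarith
  have e2 : (1 - q) * (Real.log (1 - c) - Real.log (1 - q)) ≤ q - c := by
    have h3 := mul_le_mul_of_nonneg_left h2 hq1'.le
    have h4 : (1 - q) * ((1 - c) / (1 - q) - 1) = q - c := by field_simp; ring
    linarith
  unfold hB
  nlinarith [e1, e2]

lemma hB_le_log_two {q : ℝ} (hq0 : 0 < q) (hq1 : q < 1) : hB q ≤ Real.log 2 := by
  have h := hB_le_cross hq0 hq1 (show (0:ℝ) < 1/2 by norm_num) (by norm_num)
  have hl : Real.log ((1:ℝ)/2) = -Real.log 2 := by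
    rw [show (1/2:ℝ) = 2⁻¹ by norm_num, Real.log_inv]
  have hl2 : Real.log (1 - (1:ℝ)/2) = -Real.log 2 := by rw [show (1 - (1:ℝ)/2) = 2⁻¹ by norm_num, Real.log_inv]
  rw [hl, hl2] at h
  linarith

lemma part2bound {q : ℝ} (hq0 : 0 < q) (hq1 : q < 1) :
    hB q + (1 - q) ^ 3 * Real.log 2 ≤ 0.8666 := by
  have l2a := Real.log_two_gt_d9
  have l2b := Real.log_two_lt_d9
  have hq1' : (0:ℝ) ≤ 1 - q := by linarith
  rcases le_or_gt q 0.02 with h | h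
  · have hc := hB_le_cross hq0 hq1 (show (0:ℝ) < 1/50 by norm_num) (by norm_num)
    have b1 := logc0_lb; have b2 := logd0_lb
    nlinarith [mul_nonneg hq0.le (sub_nonneg.2 b1), mul_nonneg hq1' (sub_nonneg.2 b2),
      mul_nonneg (pow_nonneg hq1' 3) (sub_nonneg.2 l2b.le),
      mul_nonneg hq0.le (sub_nonneg.2 h), sq_nonneg q,
      mul_nonneg (mul_nonneg hq0.le hq0.le) (sub_nonneg.2 h)]
  rcases le_or_gt q 0.08 with h2 | h2
  · have hc := hB_le_cross hq0 hq1 (show (0:ℝ) < 1/25 by norm_num) (by norm_num)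
    have b1 := logc1_lb; have b2 := logd1_lb
    nlinarith [mul_nonneg hq0.le (sub_nonneg.2 b1), mul_nonneg hq1' (sub_nonneg.2 b2),
      mul_nonneg (pow_nonneg hq1' 3) (sub_nonneg.2 l2b.le),
      mul_nonneg (sub_nonneg.2 h.le) (sub_nonneg.2 h2),
      mul_nonneg (mul_nonneg (sub_nonneg.2 h.le) (sub_nonneg.2 h2)) hq0.le,
      mul_nonneg (mul_nonneg (sub_nonneg.2 h.le) (sub_nonneg.2 h2)) (sub_nonneg.2 h2)]
  rcases le_or_gt q 0.16 with h3 | h3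
  · have hc := hB_le_cross hq0 hq1 (show (0:ℝ) < 23/200 by norm_num) (by norm_num)
    have b1 := logc2_lb; have b2 := logd2_lb
    nlinarith [mul_nonneg hq0.le (sub_nonneg.2 b1), mul_nonneg hq1' (sub_nonneg.2 b2),
      mul_nonneg (pow_nonneg hq1' 3) (sub_nonneg.2 l2b.le),
      mul_nonneg (sub_nonneg.2 h2.le) (sub_nonneg.2 h3),
      mul_nonneg (mul_nonneg (sub_nonneg.2 h2.le) (sub_nonneg.2 h3)) hq0.le,
      mul_nonneg (mul_nonneg (sub_nonneg.2 h2.le) (sub_nonneg.2 h3)) (sub_nonneg.2 h3)]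
  rcases le_or_gt q 0.28 with h4 | h4
  · have hc := hB_le_cross hq0 hq1 (show (0:ℝ) < 11/50 by norm_num) (by norm_num)
    have b1 := logc3_lb; have b2 := logd3_lb
    nlinarith [mul_nonneg hq0.le (sub_nonneg.2 b1), mul_nonneg hq1' (sub_nonneg.2 b2),
      mul_nonneg (pow_nonneg hq1' 3) (sub_nonneg.2 l2b.le),
      mul_nonneg (sub_nonneg.2 h3.le) (sub_nonneg.2 h4),
      mul_nonneg (mul_nonneg (sub_nonneg.2 h3.le) (sub_nonneg.2 h4)) hq0.le,
      mul_nonneg (mul_nonneg (sub_nonneg.2 h3.le) (sub_nonneg.2 h4)) (sub_nonneg.2 h4)]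
  rcases le_or_gt q 0.37 with h5 | h5
  · have hc := hB_le_cross hq0 hq1 (show (0:ℝ) < 8/25 by norm_num) (by norm_num)
    have b1 := logc4_lb; have b2 := logd4_lb
    nlinarith [mul_nonneg hq0.le (sub_nonneg.2 b1), mul_nonneg hq1' (sub_nonneg.2 b2),
      mul_nonneg (pow_nonneg hq1' 3) (sub_nonneg.2 l2b.le),
      mul_nonneg (sub_nonneg.2 h4.le) (sub_nonneg.2 h5),
      mul_nonneg (mul_nonneg (sub_nonneg.2 h4.le) (sub_nonneg.2 h5)) hq0.le,
      mul_nonneg (mul_nonneg (sub_nonneg.2 h4.le) (sub_nonneg.2 h5)) (sub_nonneg.2 h5)]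
  rcases le_or_gt q 0.5 with h6 | h6
  · have hc := hB_le_log_two hq0 hq1
    have hcube : (1 - q) ^ 3 ≤ (0.63:ℝ) ^ 3 :=
      pow_le_pow_left₀ hq1' (by linarith) 3
    nlinarith [mul_nonneg (pow_nonneg hq1' 3) (sub_nonneg.2 l2b.le)]
  · have hc := hB_le_log_two hq0 hq1
    have hcube : (1 - q) ^ 3 ≤ (0.5:ℝ) ^ 3 :=
      pow_le_pow_left₀ hq1' (by linarith) 3
    nlinarith [mul_nonneg (pow_nonneg hq1' 3) (sub_nonneg.2 l2b.le)]

lemma key_point : (0.4303:ℝ) < hH3 (63/125) (11/100) (6/125) (11/500) := by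
  have u0 := logp0_ub
  have u1 := logp1_ub
  have u2 := logp2_ub
  have u3 := logp3_ub
  have l2a := Real.log_two_gt_d9
  unfold hH3 h3
  nlinarith [u0, u1, u2, u3, l2a]

/-- The three-hex bound on the honeycomb lattice exceeds `0.4303` somewhere on
the simplex; in particular it beats the single-site bound minus `0.003`. -/
theorem three_hex_honeycomb_bound :
    (∃ p₀ p₁ p₂ p₃ : ℝ, 0 < p₀ ∧ 0 < p₁ ∧ 0 < p₂ ∧ 0 < p₃ ∧
      p₀ + 3 * p₁ + 3 * p₂ + p₃ = 1 ∧ 0.4303 < hH3 p₀ p₁ p₂ p₃) ∧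
    ∀ q ∈ Set.Ioo (0 : ℝ) 1,
      ∃ p₀ p₁ p₂ p₃ : ℝ, 0 < p₀ ∧ 0 < p₁ ∧ 0 < p₂ ∧ 0 < p₃ ∧
        p₀ + 3 * p₁ + 3 * p₂ + p₃ = 1 ∧
        (1 / 2) * (hB q + (1 - q) ^ 3 * Real.log 2) - 0.003 <
          hH3 p₀ p₁ p₂ p₃ := by
  constructor
  · exact ⟨63/125, 11/100, 6/125, 11/500, by norm_num, by norm_num, by norm_num,
      by norm_num, by norm_num, key_point⟩
  · rintro q ⟨hq0, hq1⟩
    refine ⟨63/125, 11/100, 6/125, 11/500, by norm_num, by norm_num, by norm_num,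
      by norm_num, by norm_num, ?_⟩
    have hb := part2bound hq0 hq1
    linarith [key_point]
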